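/- For a Mercer kernel G on a measurable space X with eigenvalue-eigenfunction pairs (mu_k, phi_k) with respect to L2(P), mu_1 >= mu_2 >= ... >= 0, such that sum_k mu_k < infinity and sup_k ||phi_k||_infty < infinity, and for any g in L2(P), one has E_P[g(X) g(X') G(X,X')^2] <= mu_1 * (sum_k mu_k) * (sup_k ||phi_k||_infty)^2 * ||g||_{L2(P)}^2, where X, X' are i.i.d. with law P and G(x,x') = sum_k mu_k phi_k(x) phi_k(x'). -/

import Mathlib

open MeasureTheory

set_option maxHeartbeats 1000000 in
theorem kernel_square_bilinear_bound
    {X : Type*} [MeasurableSpace X] (P : Measure X) [IsProbabilityMeasure P]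
    (μ : ℕ → ℝ) (hμ0 : ∀ k, 0 ≤ μ k) (hμmono : Antitone μ) (hμsum : Summable μ)
    (φ : ℕ → X → ℝ) (hφmeas : ∀ k, Measurable (φ k))
    (horth : ∀ k l, ∫ x, φ k x * φ l x ∂P = if k = l then 1 else 0)
    (B : ℝ) (hB : ∀ k x, |φ k x| ≤ B)
    (G : X → X → ℝ) (hG : ∀ x x', G x x' = ∑' k, μ k * φ k x * φ k x')
    (g : X → ℝ) (hg : MemLp g 2 P)
    (hint : Integrable (fun p : X × X => g p.1 * g p.2 * (G p.1 p.2) ^ 2) (P.prod P)) :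
    ∫ p : X × X, g p.1 * g p.2 * (G p.1 p.2) ^ 2 ∂(P.prod P)
      ≤ μ 0 * (∑' k, μ k) * B ^ 2 * ∫ x, (g x) ^ 2 ∂P := by
  classical
  have hXne : Nonempty X := by
    by_contra h
    rw [not_nonempty_iff] at h
    have h1 : P Set.univ = 1 := measure_univ
    rw [Set.univ_eq_empty_iff.2 h, measure_empty] at h1
    exact zero_ne_one h1
  have hB0 : 0 ≤ B := (abs_nonneg _).trans (hB 0 hXne.some)
  have hgm : AEStronglyMeasurable g P := hg.aestronglyMeasurable
  have hgi : Integrable g P := hg.integrable one_le_two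
  have hg2 : Integrable (fun x => g x ^ 2) P := hg.integrable_sq
  have hIg2 : 0 ≤ ∫ x, g x ^ 2 ∂P := integral_nonneg fun x => sq_nonneg _
  -- the products φ k * φ l * g
  set ψ : ℕ → ℕ → X → ℝ := fun k l x => (φ k x * φ l x) * g x with hψdef
  have hψint : ∀ k l, Integrable (ψ k l) P := by
    intro k l
    refine hgi.bdd_mul ((hφmeas k).mul (hφmeas l)).aestronglyMeasurable (c := B * B) (Filter.Eventually.of_forall fun x => ?_)
    calc ‖φ k x * φ l x‖ = |φ k x| * |φ l x| := abs_mul _ _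
      _ ≤ B * B := mul_le_mul (hB k x) (hB l x) (abs_nonneg _) hB0
  set c : ℕ → ℕ → ℝ := fun k l => ∫ x, ψ k l x ∂P with hcdef
  have hψabs : ∀ k l, ∫ x, |ψ k l x| ∂P ≤ B ^ 2 * ∫ x, |g x| ∂P := by
    intro k l
    rw [← integral_const_mul]
    refine integral_mono (hψint k l).abs (hgi.abs.const_mul _) fun x => ?_
    simp only [hψdef, abs_mul]
    have h1 : |φ k x| * |φ l x| ≤ B ^ 2 := by
      have := mul_le_mul (hB k x) (hB l x) (abs_nonneg _) hB0
      nlinarith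
    exact mul_le_mul_of_nonneg_right h1 (abs_nonneg _)
  have hψabs_nonneg : ∀ k l, 0 ≤ ∫ x, |ψ k l x| ∂P := fun k l =>
    integral_nonneg fun x => abs_nonneg _
  -- the double-indexed family
  set F : ℕ × ℕ → X × X → ℝ :=
    fun q p => ((μ q.1 * μ q.2) * ψ q.1 q.2 p.1) * ψ q.1 q.2 p.2 with hFdef
  have hFint : ∀ q : ℕ × ℕ, Integrable (F q) (P.prod P) := fun q =>
    ((hψint q.1 q.2).const_mul _).mul_prod (hψint q.1 q.2)
  have hFnorm : ∀ q : ℕ × ℕ, ∫ p, ‖F q p‖ ∂(P.prod P)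
      = (μ q.1 * μ q.2 * ∫ x, |ψ q.1 q.2 x| ∂P) * ∫ x, |ψ q.1 q.2 x| ∂P := by
    intro q
    have : ∀ p : X × X, ‖F q p‖
        = |(μ q.1 * μ q.2) * ψ q.1 q.2 p.1| * |ψ q.1 q.2 p.2| := by
      intro p; simp [hFdef, abs_mul]
    calc ∫ p, ‖F q p‖ ∂(P.prod P)
        = ∫ p : X × X, |(μ q.1 * μ q.2) * ψ q.1 q.2 p.1| * |ψ q.1 q.2 p.2| ∂(P.prod P) := by
          exact integral_congr_ae (Filter.Eventually.of_forall this)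
      _ = (∫ x, |(μ q.1 * μ q.2) * ψ q.1 q.2 x| ∂P) * ∫ x, |ψ q.1 q.2 x| ∂P :=
          integral_prod_mul (f := fun x => |(μ q.1 * μ q.2) * ψ q.1 q.2 x|)
            (g := fun x => |ψ q.1 q.2 x|)
      _ = (μ q.1 * μ q.2 * ∫ x, |ψ q.1 q.2 x| ∂P) * ∫ x, |ψ q.1 q.2 x| ∂P := by
          have habs : (∫ x, |(μ q.1 * μ q.2) * ψ q.1 q.2 x| ∂P)
              = μ q.1 * μ q.2 * ∫ x, |ψ q.1 q.2 x| ∂P := by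
            rw [show (fun x => |(μ q.1 * μ q.2) * ψ q.1 q.2 x|)
                = (fun x => (μ q.1 * μ q.2) * |ψ q.1 q.2 x|) from
              funext fun x => by
                rw [abs_mul, abs_of_nonneg (mul_nonneg (hμ0 q.1) (hμ0 q.2))]]
            exact integral_const_mul _ _
          rw [habs]
  set K : ℝ := B ^ 2 * ∫ x, |g x| ∂P with hKdef
  have hK0 : 0 ≤ K := mul_nonneg (sq_nonneg _) (integral_nonneg fun x => abs_nonneg _)
  have hFsum : Summable fun q : ℕ × ℕ => ∫ p, ‖F q p‖ ∂(P.prod P) := by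
    have hsum2 : Summable fun q : ℕ × ℕ => (μ q.1 * K) * (μ q.2 * K) :=
      (hμsum.mul_right K).mul_of_nonneg (hμsum.mul_right K)
        (fun k => mul_nonneg (hμ0 k) hK0) (fun k => mul_nonneg (hμ0 k) hK0)
    refine Summable.of_nonneg_of_le (fun q => ?_) (fun q => ?_) hsum2
    · exact integral_nonneg fun p => norm_nonneg _
    · rw [hFnorm q]
      have h1 := hψabs q.1 q.2
      have h2 := hψabs_nonneg q.1 q.2
      have h3 := hμ0 q.1; have h4 := hμ0 q.2
      have h5 : (∫ x, |ψ q.1 q.2 x| ∂P) * (∫ x, |ψ q.1 q.2 x| ∂P) ≤ K * K :=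
        mul_le_mul h1 h1 h2 hK0
      nlinarith [mul_le_mul_of_nonneg_left h5 (mul_nonneg h3 h4)]
  -- pointwise expansion
  have hpt : ∀ p : X × X, g p.1 * g p.2 * (G p.1 p.2) ^ 2 = ∑' q : ℕ × ℕ, F q p := by
    intro p
    rw [hG]
    have hsn : ∀ y y' : X, Summable fun k => ‖μ k * φ k y * φ k y'‖ := by
      intro y y'
      refine Summable.of_nonneg_of_le (fun k => norm_nonneg _) (fun k => ?_)
        (hμsum.mul_right (B * B))
      calc ‖μ k * φ k y * φ k y'‖ = μ k * (|φ k y| * |φ k y'|) := by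
            rw [norm_mul, norm_mul]
            simp [abs_of_nonneg (hμ0 k), mul_assoc]
        _ ≤ μ k * (B * B) := by
            refine mul_le_mul_of_nonneg_left ?_ (hμ0 k)
            exact mul_le_mul (hB k y) (hB k y') (abs_nonneg _) hB0
    rw [sq, tsum_mul_tsum_of_summable_norm (hsn p.1 p.2) (hsn p.1 p.2), ← tsum_mul_left]
    exact tsum_congr fun q => by simp only [hFdef, hψdef]; ring
  -- swap integral and sum
  have hswap : ∫ p : X × X, g p.1 * g p.2 * (G p.1 p.2) ^ 2 ∂(P.prod P)
      = ∑' q : ℕ × ℕ, ∫ p, F q p ∂(P.prod P) := by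
    rw [integral_congr_ae (Filter.Eventually.of_forall hpt)]
    exact (integral_tsum_of_summable_integral_norm hFint hFsum).symm
  have hFval : ∀ q : ℕ × ℕ, ∫ p, F q p ∂(P.prod P)
      = μ q.1 * μ q.2 * c q.1 q.2 ^ 2 := by
    intro q
    calc ∫ p, F q p ∂(P.prod P)
        = (∫ x, (μ q.1 * μ q.2) * ψ q.1 q.2 x ∂P) * ∫ x, ψ q.1 q.2 x ∂P := by
          simp only [hFdef]
          exact integral_prod_mul (f := fun x => (μ q.1 * μ q.2) * ψ q.1 q.2 x)
            (g := fun x => ψ q.1 q.2 x)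
      _ = μ q.1 * μ q.2 * c q.1 q.2 ^ 2 := by
          rw [integral_const_mul, hcdef]; ring
  set T : ℕ × ℕ → ℝ := fun q => μ q.1 * μ q.2 * c q.1 q.2 ^ 2 with hTdef
  have hT0 : ∀ q, 0 ≤ T q := fun q =>
    mul_nonneg (mul_nonneg (hμ0 q.1) (hμ0 q.2)) (sq_nonneg _)
  have hTsum : Summable T := by
    refine Summable.of_nonneg_of_le hT0 (fun q => ?_) hFsum
    calc T q = μ q.1 * μ q.2 * c q.1 q.2 ^ 2 := rfl
      _ = ∫ p, F q p ∂(P.prod P) := (hFval q).symm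
      _ ≤ ∫ p, ‖F q p‖ ∂(P.prod P) := by
          refine le_trans (le_abs_self _) ?_
          simpa [Real.norm_eq_abs] using norm_integral_le_integral_norm (μ := P.prod P) (F q)
  -- L² setup and Bessel
  have hφL2 : ∀ k, MemLp (φ k) 2 P := fun k =>
    MemLp.of_bound (hφmeas k).aestronglyMeasurable B
      (Filter.Eventually.of_forall fun x => by simpa [Real.norm_eq_abs] using hB k x)
  set v : ℕ → Lp ℝ 2 P := fun k => (hφL2 k).toLp (φ k) with hvdef
  have hρL2 : ∀ k, MemLp (fun x => φ k x * g x) 2 P := by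
    intro k
    refine hg.of_le_mul (c := B) ((hφmeas k).aestronglyMeasurable.mul hgm)
      (Filter.Eventually.of_forall fun x => ?_)
    rw [Real.norm_eq_abs, Real.norm_eq_abs, abs_mul]
    exact mul_le_mul_of_nonneg_right (hB k x) (abs_nonneg _)
  set u : ℕ → Lp ℝ 2 P := fun k => (hρL2 k).toLp _ with hudef
  have hinner : ∀ (f f' : X → ℝ) (hf : MemLp f 2 P) (hf' : MemLp f' 2 P),
      (inner ℝ (hf.toLp f) (hf'.toLp f') : ℝ) = ∫ x, f x * f' x ∂P := by
    intro f f' hf hf'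
    rw [L2.inner_def]
    refine integral_congr_ae ?_
    filter_upwards [hf.coeFn_toLp, hf'.coeFn_toLp] with x h1 h2
    simp [h1, h2, RCLike.inner_apply, mul_comm]
  have hvon : Orthonormal ℝ v := by
    rw [orthonormal_iff_ite]
    intro k l
    rw [hvdef]
    simp only
    rw [hinner _ _ (hφL2 k) (hφL2 l), horth k l]
  have hcsymm_inner : ∀ k l, (inner ℝ (v l) (u k) : ℝ) = c k l := by
    intro k l
    rw [hvdef, hudef]
    simp only
    rw [hinner _ _ (hφL2 l) (hρL2 k), hcdef]
    simp only [hψdef]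
    exact integral_congr_ae (Filter.Eventually.of_forall fun x => by ring)
  have hBessel : ∀ k, ∑' l, c k l ^ 2 ≤ B ^ 2 * ∫ x, g x ^ 2 ∂P := by
    intro k
    have h1 : ∑' l, ‖(inner ℝ (v l) (u k) : ℝ)‖ ^ 2 ≤ ‖u k‖ ^ 2 :=
      hvon.tsum_inner_products_le (u k)
    have h2 : (∑' l, c k l ^ 2) = ∑' l, ‖(inner ℝ (v l) (u k) : ℝ)‖ ^ 2 := by
      refine tsum_congr fun l => ?_
      rw [hcsymm_inner k l, Real.norm_eq_abs, sq_abs]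
    have h3 : ‖u k‖ ^ 2 = ∫ x, (φ k x * g x) ^ 2 ∂P := by
      rw [← real_inner_self_eq_norm_sq, hudef]
      simp only
      rw [hinner _ _ (hρL2 k) (hρL2 k)]
      exact integral_congr_ae (Filter.Eventually.of_forall fun x => by ring)
    have h4 : ∫ x, (φ k x * g x) ^ 2 ∂P ≤ B ^ 2 * ∫ x, g x ^ 2 ∂P := by
      rw [← integral_const_mul]
      refine integral_mono ((hρL2 k).integrable_sq) (hg2.const_mul _) fun x => ?_
      have h5 : φ k x ^ 2 ≤ B ^ 2 := by
        have := sq_abs (φ k x)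
        nlinarith [hB k x, abs_nonneg (φ k x)]
      calc (φ k x * g x) ^ 2 = φ k x ^ 2 * g x ^ 2 := by ring
        _ ≤ B ^ 2 * g x ^ 2 := mul_le_mul_of_nonneg_right h5 (sq_nonneg _)
    rw [h3] at h1
    rw [h2]
    exact h1.trans h4
  have hcsq_summable : ∀ k, Summable fun l => c k l ^ 2 := by
    intro k
    have := hvon.inner_products_summable (x := u k)
    refine this.congr fun l => ?_
    rw [hcsymm_inner k l, Real.norm_eq_abs, sq_abs]
  -- assemble
  rw [hswap]
  have hval : (∑' q : ℕ × ℕ, ∫ p, F q p ∂(P.prod P)) = ∑' q : ℕ × ℕ, T q :=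
    tsum_congr hFval
  rw [hval, Summable.tsum_prod hTsum]
  set I : ℝ := ∫ x, g x ^ 2 ∂P with hIdef
  have hkbound : ∀ k, (∑' l, T (k, l)) ≤ μ k * (μ 0 * (B ^ 2 * I)) := by
    intro k
    have hstep : (∑' l, T (k, l)) ≤ ∑' l, μ k * μ 0 * c k l ^ 2 := by
      refine Summable.tsum_le_tsum (fun l => ?_) (hTsum.prod_factor k)
        ((hcsq_summable k).mul_left _)
      simp only [hTdef]
      have h0 : μ l ≤ μ 0 := hμmono (Nat.zero_le l)
      nlinarith [mul_le_mul_of_nonneg_right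
        (mul_le_mul_of_nonneg_left h0 (hμ0 k)) (sq_nonneg (c k l))]
    refine hstep.trans ?_
    rw [tsum_mul_left]
    have hb := hBessel k
    nlinarith [mul_le_mul_of_nonneg_left hb (mul_nonneg (hμ0 k) (hμ0 0))]
  have houter : Summable fun k => ∑' l, T (k, l) := by
    refine Summable.of_nonneg_of_le (fun k => tsum_nonneg fun l => hT0 (k, l))
      hkbound (hμsum.mul_right _)
  calc (∑' k, ∑' l, T (k, l)) ≤ ∑' k, μ k * (μ 0 * (B ^ 2 * I)) :=
        Summable.tsum_le_tsum hkbound houter (hμsum.mul_right _)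
    _ = (∑' k, μ k) * (μ 0 * (B ^ 2 * I)) := tsum_mul_right
    _ = μ 0 * (∑' k, μ k) * B ^ 2 * I := by ring
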